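/- Let N be a prime, 1 ≤ d < N, and let n = (n₁,…,n_d) be a d-tuple of pairwise distinct elements of ℤ/Nℤ such that the stabilizer of the set {n₁,…,n_d} under the multiplication action of (ℤ/Nℤ)ˣ is trivial (equivalently, the orbit of {n₁,…,n_d} has N−1 elements). Let D = diag(ω^{n₁},…,ω^{n_d}) with ω = exp(2πi/N). Then every unitary transformation U of ℂ^d satisfying U·{φ_{m,n} : m ∈ ℤ/Nℤ} = {φ_{m,n} : m ∈ ℤ/Nℤ} is of the form U = D^k for some integer k with 0 ≤ k ≤ N−1; that is, the symmetry group of the frame is the cyclic group generated by D. -/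

import Mathlib

open scoped BigOperators

/-- The `m`-th vector of the DFT-FUNTF associated to the generators `n = (n₁,…,n_d)`:
its `k`-th coordinate is `(1/√d)·ω^(m·n_k)` where `ω = exp(2πi/N)`. -/
noncomputable def dftVec (N d : ℕ) (n : Fin d → ZMod N) (m : ZMod N) : Fin d → ℂ :=
  fun k => ((1 / Real.sqrt d : ℝ) : ℂ) *
    Complex.exp (2 * Real.pi * Complex.I / N) ^ (m * n k).val

namespace DFTFrameAux

open Polynomial in
lemma coeffs_eq (N : ℕ) [NeZero N] (hN : N.Prime) (c : ZMod N → ℤ)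
    (h : ∑ j : ZMod N, (c j : ℂ) * Complex.exp (2 * Real.pi * Complex.I / N) ^ j.val = 0) :
    ∀ i j : ZMod N, c i = c j := by
  haveI := Fact.mk hN
  set ω : ℂ := Complex.exp (2 * Real.pi * Complex.I / N) with hωdef
  have hω : IsPrimitiveRoot ω N := Complex.isPrimitiveRoot_exp N (NeZero.ne N)
  set P : ℚ[X] := ∑ i ∈ Finset.range N, C ((c i : ℚ)) * X ^ i with hP
  have hval : aeval ω P = 0 := by
    rw [hP, map_sum]
    rw [← h]
    refine Finset.sum_nbij' (fun i => ((i : ZMod N))) (fun j => j.val) ?_ ?_ ?_ ?_ ?_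
    · intro i _; exact Finset.mem_univ _
    · intro j _; exact Finset.mem_range.mpr (ZMod.val_lt j)
    · intro i hi; exact ZMod.val_cast_of_lt (Finset.mem_range.mp hi)
    · intro j _; exact ZMod.natCast_rightInverse j
    · intro i hi
      simp only [map_mul, aeval_C, map_pow, aeval_X]
      rw [ZMod.val_cast_of_lt (Finset.mem_range.mp hi), map_intCast, mul_comm]
  have hdvd : cyclotomic N ℚ ∣ P := by
    rw [Polynomial.cyclotomic_eq_minpoly_rat hω hN.pos]
    exact minpoly.dvd ℚ ω hval
  obtain ⟨q, hq⟩ := hdvd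
  have hcycdeg : (cyclotomic N ℚ).natDegree = N - 1 := by
    rw [natDegree_cyclotomic, Nat.totient_prime hN]
  have hPdeg : P.natDegree ≤ N - 1 := by
    rw [hP]
    refine Polynomial.natDegree_sum_le_of_forall_le _ _ ?_
    intro i hi
    refine le_trans (natDegree_C_mul_le _ _) ?_
    rw [natDegree_X_pow]
    exact Nat.le_sub_one_of_lt (Finset.mem_range.mp hi)
  have hqdeg : q.natDegree = 0 := by
    by_cases hq0 : q = 0
    · simp [hq0]
    · have := Polynomial.natDegree_mul (cyclotomic_ne_zero N ℚ) hq0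
      rw [← hq, hcycdeg] at this
      omega
  obtain ⟨r, hr⟩ := Polynomial.natDegree_eq_zero.mp hqdeg
  have hcoeff : ∀ i : ℕ, i < N → (c (i : ZMod N) : ℚ) = r := by
    intro i hi
    have h1 : P.coeff i = (c (i : ZMod N) : ℚ) := by
      rw [hP, finset_sum_coeff]
      simp only [coeff_C_mul, coeff_X_pow]
      rw [Finset.sum_eq_single i]
      · simp
      · intro b _ hb; simp [Ne.symm hb]
      · intro hcon; exact absurd (Finset.mem_range.mpr hi) hcon
    have h2 : P.coeff i = r := by
      rw [hq, ← hr, mul_comm, coeff_C_mul, Polynomial.cyclotomic_prime ℚ N]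
      rw [finset_sum_coeff]
      simp only [coeff_X_pow]
      rw [Finset.sum_eq_single i]
      · simp
      · intro b _ hb; simp [Ne.symm hb]
      · intro hcon; exact absurd (Finset.mem_range.mpr hi) hcon
    rw [← h1, h2]
  intro i j
  have hi := hcoeff i.val (ZMod.val_lt i)
  have hj := hcoeff j.val (ZMod.val_lt j)
  rw [ZMod.natCast_rightInverse i] at hi
  rw [ZMod.natCast_rightInverse j] at hj
  exact_mod_cast hi.trans hj.symm

lemma zmod_sum_val (N : ℕ) [NeZero N] (f : ℕ → ℂ) :
    ∑ m : ZMod N, f m.val = ∑ i ∈ Finset.range N, f i := by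
  refine Finset.sum_nbij' (fun m => m.val) (fun i => ((i : ZMod N))) ?_ ?_ ?_ ?_ ?_
  · intro m _; exact Finset.mem_range.mpr (ZMod.val_lt m)
  · intro i _; exact Finset.mem_univ _
  · intro m _; exact ZMod.natCast_rightInverse m
  · intro i hi; exact ZMod.val_cast_of_lt (Finset.mem_range.mp hi)
  · intro m _; rfl

lemma sum_e_zero (N : ℕ) [NeZero N] (hN : N.Prime) (a : ZMod N) (ha : a ≠ 0) :
    ∑ m : ZMod N, Complex.exp (2 * Real.pi * Complex.I / N) ^ (m * a).val = 0 := by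
  haveI := Fact.mk hN
  set ω : ℂ := Complex.exp (2 * Real.pi * Complex.I / N) with hωdef
  have hω : IsPrimitiveRoot ω N := Complex.isPrimitiveRoot_exp N (NeZero.ne N)
  have h1 : ∑ m : ZMod N, ω ^ (m * a).val = ∑ m : ZMod N, ω ^ m.val :=
    Equiv.sum_comp (Equiv.mulRight₀ a ha) (fun m => ω ^ m.val)
  rw [h1, zmod_sum_val N (fun i => ω ^ i), geom_sum_eq (hω.ne_one hN.one_lt) N,
    hω.pow_eq_one]
  simp

lemma e_mod (N : ℕ) [NeZero N] (x : ℕ) :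
    Complex.exp (2 * Real.pi * Complex.I / N) ^ (x % N)
      = Complex.exp (2 * Real.pi * Complex.I / N) ^ x := by
  have hω : IsPrimitiveRoot (Complex.exp (2 * Real.pi * Complex.I / N)) N :=
    Complex.isPrimitiveRoot_exp N (NeZero.ne N)
  conv_rhs => rw [← Nat.mod_add_div x N]
  rw [pow_add, pow_mul, hω.pow_eq_one, one_pow, mul_one]

lemma e_add (N : ℕ) [NeZero N] (u v : ZMod N) :
    Complex.exp (2 * Real.pi * Complex.I / N) ^ (u + v).val
      = Complex.exp (2 * Real.pi * Complex.I / N) ^ u.val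
        * Complex.exp (2 * Real.pi * Complex.I / N) ^ v.val := by
  rw [ZMod.val_add, e_mod, pow_add]

lemma e_conj2 (N : ℕ) [NeZero N] (u : ZMod N) :
    (starRingEnd ℂ) (Complex.exp (2 * Real.pi * Complex.I / N) ^ u.val)
      = Complex.exp (2 * Real.pi * Complex.I / N) ^ (-u).val := by
  set ω : ℂ := Complex.exp (2 * Real.pi * Complex.I / N) with hωdef
  have h1 : ω ^ u.val * ω ^ (-u).val = 1 := by
    rw [← e_add]
    simp [ZMod.val_zero]
  have habs : ‖ω‖ = 1 := by
    rw [hωdef]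
    have : (2 * Real.pi * Complex.I / N) = ((2 * Real.pi / N : ℝ) : ℂ) * Complex.I := by
      push_cast; ring
    rw [this, Complex.norm_exp_ofReal_mul_I]
  have h2 : ω ^ u.val * (starRingEnd ℂ) (ω ^ u.val) = 1 := by
    rw [Complex.mul_conj]
    norm_cast
    rw [← Complex.sq_norm, norm_pow, habs, one_pow, one_pow]
  rw [← inv_eq_of_mul_eq_one_right h1, ← inv_eq_of_mul_eq_one_right h2]

lemma g_inj (N d : ℕ) [NeZero N] (hN : N.Prime) (n : Fin d → ZMod N)
    (hstab : ∀ u : (ZMod N)ˣ,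
      (fun x => (u : ZMod N) * x) '' Set.range n = Set.range n → u = 1)
    (k0 : Fin d) (hk0 : n k0 ≠ 0) (a b : ZMod N)
    (h : ∑ k : Fin d, Complex.exp (2 * Real.pi * Complex.I / N) ^ (a * n k).val
       = ∑ k : Fin d, Complex.exp (2 * Real.pi * Complex.I / N) ^ (b * n k).val) :
    a = b := by
  haveI := Fact.mk hN
  set ω : ℂ := Complex.exp (2 * Real.pi * Complex.I / N) with hωdef
  set cnt : ZMod N → ZMod N → ℕ :=
    fun x j => (Finset.univ.filter (fun k => x * n k = j)).card with hcnt
  have hsum : ∀ x : ZMod N, ∑ j : ZMod N, (cnt x j : ℂ) * ω ^ j.val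
      = ∑ k : Fin d, ω ^ (x * n k).val := by
    intro x
    rw [← Finset.sum_fiberwise Finset.univ (fun k => x * n k) (fun k => ω ^ (x * n k).val)]
    refine Finset.sum_congr rfl (fun j _ => ?_)
    rw [Finset.sum_congr rfl (fun k hk => by rw [(Finset.mem_filter.mp hk).2]),
      Finset.sum_const, nsmul_eq_mul]
  have hc0 : ∑ j : ZMod N, ((((cnt a j : ℤ) - (cnt b j : ℤ)) : ℤ) : ℂ) * ω ^ j.val = 0 := by
    push_cast
    simp only [sub_mul]
    rw [Finset.sum_sub_distrib, hsum a, hsum b, h, sub_self]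
  have hall := coeffs_eq N hN (fun j => (cnt a j : ℤ) - (cnt b j : ℤ)) hc0
  have hsumcnt : ∀ x : ZMod N, ∑ j : ZMod N, (cnt x j : ℤ) = d := by
    intro x
    have := Finset.sum_fiberwise Finset.univ (fun k => x * n k) (fun _ => (1:ℤ))
    simpa [hcnt] using this
  have heq : ∀ j : ZMod N, cnt a j = cnt b j := by
    intro j
    have h2 : ∑ j' : ZMod N, ((cnt a j' : ℤ) - (cnt b j' : ℤ)) = 0 := by
      rw [Finset.sum_sub_distrib, hsumcnt a, hsumcnt b, sub_self]
    have h3 : ∑ j' : ZMod N, ((cnt a j' : ℤ) - (cnt b j' : ℤ))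
        = N * ((cnt a j : ℤ) - (cnt b j : ℤ)) := by
      rw [Finset.sum_congr rfl (fun j' _ => hall j' j), Finset.sum_const, nsmul_eq_mul]
      simp [ZMod.card]
    rw [h2] at h3
    have hN0 : (N : ℤ) ≠ 0 := by exact_mod_cast (NeZero.ne N)
    have := (mul_eq_zero.mp h3.symm).resolve_left hN0
    omega
  have hex : ∀ x j : ZMod N, cnt x j ≠ 0 ↔ ∃ k, x * n k = j := by
    intro x j
    constructor
    · intro hne
      obtain ⟨k, hk⟩ := Finset.card_ne_zero.mp hne
      exact ⟨k, (Finset.mem_filter.mp hk).2⟩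
    · rintro ⟨k, hk⟩
      exact Finset.card_ne_zero.mpr ⟨k, Finset.mem_filter.mpr ⟨Finset.mem_univ k, hk⟩⟩
  by_cases ha : a = 0
  · by_cases hb : b = 0
    · rw [ha, hb]
    · exfalso
      have hca : cnt a 0 = d := by
        have huniv : (Finset.univ.filter (fun k => a * n k = 0)) = Finset.univ :=
          Finset.filter_true_of_mem (fun k _ => by rw [ha, zero_mul])
        simp only [hcnt]
        rw [huniv, Finset.card_univ, Fintype.card_fin]
      have hcb : cnt b 0 = d := by rw [← heq 0]; exact hca
      simp only [hcnt] at hcb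
      have huniv := Finset.eq_univ_of_card _ (hcb.trans (Fintype.card_fin d).symm)
      have hmem : k0 ∈ Finset.univ.filter (fun k => b * n k = 0) := by
        rw [huniv]; exact Finset.mem_univ k0
      rcases mul_eq_zero.mp ((Finset.mem_filter.mp hmem).2) with h' | h'
      · exact hb h'
      · exact hk0 h'
  · by_cases hb : b = 0
    · exfalso
      have hcb : cnt b 0 = d := by
        have huniv : (Finset.univ.filter (fun k => b * n k = 0)) = Finset.univ :=
          Finset.filter_true_of_mem (fun k _ => by rw [hb, zero_mul])
        simp only [hcnt]
        rw [huniv, Finset.card_univ, Fintype.card_fin]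
      have hca : cnt a 0 = d := by rw [heq 0]; exact hcb
      simp only [hcnt] at hca
      have huniv := Finset.eq_univ_of_card _ (hca.trans (Fintype.card_fin d).symm)
      have hmem : k0 ∈ Finset.univ.filter (fun k => a * n k = 0) := by
        rw [huniv]; exact Finset.mem_univ k0
      rcases mul_eq_zero.mp ((Finset.mem_filter.mp hmem).2) with h' | h'
      · exact ha h'
      · exact hk0 h'
    · have hset : ∀ j : ZMod N, (∃ k, a * n k = j) ↔ (∃ k, b * n k = j) := by
        intro j
        rw [← hex, ← hex, heq j]
      set u : (ZMod N)ˣ := Units.mk0 (b * a⁻¹) (mul_ne_zero hb (inv_ne_zero ha)) with hu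
      have himg : (fun x => (u : ZMod N) * x) '' Set.range n = Set.range n := by
        ext x
        constructor
        · rintro ⟨y, ⟨k, rfl⟩, rfl⟩
          obtain ⟨k', hk'⟩ := (hset (b * n k)).mpr ⟨k, rfl⟩
          refine ⟨k', ?_⟩
          have h5 : n k' = a⁻¹ * (a * n k') := by
            rw [← mul_assoc, inv_mul_cancel₀ ha, one_mul]
          show n k' = (u : ZMod N) * n k
          rw [h5, hk', hu]
          simp only [Units.val_mk0]
          ring
        · rintro ⟨k, rfl⟩
          obtain ⟨k', hk'⟩ := (hset (a * n k)).mp ⟨k, rfl⟩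
          refine ⟨n k', ⟨k', rfl⟩, ?_⟩
          show (u : ZMod N) * n k' = n k
          have h5 : (u : ZMod N) * n k' = a⁻¹ * (b * n k') := by
            rw [hu]; simp only [Units.val_mk0]; ring
          rw [h5, hk', ← mul_assoc, inv_mul_cancel₀ ha, one_mul]
      have hu1 := hstab u himg
      have hba1 : b * a⁻¹ = 1 := by
        have := congrArg (Units.val) hu1
        rwa [hu, Units.val_mk0, Units.val_one] at this
      have hba : b = a := by
        field_simp at hba1
        exact hba1
      exact hba.symm

lemma ip_unitary (d : ℕ) (U : Matrix (Fin d) (Fin d) ℂ)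
    (hU : U ∈ Matrix.unitaryGroup (Fin d) ℂ) (x y : Fin d → ℂ) :
    dotProduct (star (U.mulVec x)) (U.mulVec y)
      = dotProduct (star x) y := by
  rw [Matrix.star_mulVec, Matrix.dotProduct_mulVec, Matrix.vecMul_vecMul]
  have h1 : U.conjTranspose * U = 1 := by
    have := hU.1
    rwa [Matrix.star_eq_conjTranspose] at this
  rw [h1, Matrix.vecMul_one]

lemma ip_formula2 (N d : ℕ) [NeZero N] (n : Fin d → ZMod N) (a b : ZMod N) :
    dotProduct (star (dftVec N d n a)) (dftVec N d n b)
      = ((1 / Real.sqrt d : ℝ) : ℂ) ^ 2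
        * ∑ k : Fin d, Complex.exp (2 * Real.pi * Complex.I / N) ^ ((b - a) * n k).val := by
  set ω : ℂ := Complex.exp (2 * Real.pi * Complex.I / N) with hωdef
  set c : ℝ := (1 / Real.sqrt d : ℝ) with hc
  rw [dotProduct, Finset.mul_sum]
  refine Finset.sum_congr rfl fun k _ => ?_
  have e1 := e_conj2 N (a * n k)
  rw [starRingEnd_apply] at e1
  have h1 : star (dftVec N d n a) k = (c : ℂ) * ω ^ ((-(a * n k)).val) := by
    simp only [Pi.star_apply, dftVec, star_mul', e1, Complex.star_def, Complex.conj_ofReal]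
    rfl
  rw [h1]
  have h2 : ω ^ ((-(a * n k)).val) * ω ^ ((b * n k).val) = ω ^ (((b - a) * n k).val) := by
    rw [← e_add]
    have : -(a * n k) + b * n k = (b - a) * n k := by ring
    rw [this]
  calc (c:ℂ) * ω ^ ((-(a * n k)).val) * (dftVec N d n b k)
      = (c:ℂ)^2 * (ω ^ ((-(a * n k)).val) * ω ^ ((b * n k).val)) := by
        simp only [dftVec]; ring
    _ = (c:ℂ)^2 * ω ^ (((b - a) * n k).val) := by rw [h2]

lemma complete2 (N d : ℕ) [NeZero N] (hN : N.Prime) (hd : 1 ≤ d) (n : Fin d → ZMod N)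
    (hn : Function.Injective n) (M : Matrix (Fin d) (Fin d) ℂ)
    (h : ∀ m : ZMod N, M.mulVec (dftVec N d n m) = 0) : M = 0 := by
  set ω : ℂ := Complex.exp (2 * Real.pi * Complex.I / N) with hωdef
  set c : ℝ := (1 / Real.sqrt d : ℝ) with hc
  have hcne : (c : ℂ) ≠ 0 := by
    have hd0 : (0:ℝ) < Real.sqrt d := Real.sqrt_pos.mpr (by exact_mod_cast hd)
    simp only [hc]
    norm_cast
    positivity
  ext k k'
  have key : ∀ m : ZMod N, ∑ j : Fin d, M k j * ((c:ℂ) * ω ^ (m * n j).val) = 0 := by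
    intro m
    have := congrFun (h m) k
    simp only [Matrix.mulVec, dotProduct, dftVec, Pi.zero_apply] at this
    exact this
  have h0 : ∑ m : ZMod N,
      (∑ j : Fin d, M k j * ((c:ℂ) * ω ^ (m * n j).val)) * ω ^ ((-(m * n k')).val) = 0 :=
    Finset.sum_eq_zero fun m _ => by rw [key m, zero_mul]
  have h1 : ∑ m : ZMod N,
      (∑ j : Fin d, M k j * ((c:ℂ) * ω ^ (m * n j).val)) * ω ^ ((-(m * n k')).val)
      = (M k k' * (c:ℂ)) * N := by
    have e1 : ∀ m : ZMod N,
        (∑ j : Fin d, M k j * ((c:ℂ) * ω ^ (m * n j).val)) * ω ^ ((-(m * n k')).val)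
        = ∑ j : Fin d, (M k j * (c:ℂ)) * ω ^ ((m * (n j - n k')).val) := by
      intro m
      rw [Finset.sum_mul]
      refine Finset.sum_congr rfl fun j _ => ?_
      have h2 : ω ^ ((m * n j).val) * ω ^ ((-(m * n k')).val)
          = ω ^ ((m * (n j - n k')).val) := by
        rw [← e_add]
        have : m * n j + -(m * n k') = m * (n j - n k') := by ring
        rw [this]
      calc M k j * ((c:ℂ) * ω ^ (m * n j).val) * ω ^ ((-(m * n k')).val)
          = (M k j * (c:ℂ)) * (ω ^ ((m * n j).val) * ω ^ ((-(m * n k')).val)) := by ring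
        _ = (M k j * (c:ℂ)) * ω ^ ((m * (n j - n k')).val) := by rw [h2]
    rw [Finset.sum_congr rfl fun m _ => e1 m, Finset.sum_comm]
    have e2 : ∀ j : Fin d,
        ∑ m : ZMod N, (M k j * (c:ℂ)) * ω ^ ((m * (n j - n k')).val)
        = (M k j * (c:ℂ)) * ∑ m : ZMod N, ω ^ ((m * (n j - n k')).val) := by
      intro j; rw [Finset.mul_sum]
    rw [Finset.sum_congr rfl fun j _ => e2 j]
    rw [Finset.sum_eq_single k']
    · have h3 : n k' - n k' = 0 := sub_self _
      rw [h3]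
      have e3 : ∀ m : ZMod N, ω ^ ((m * (0 : ZMod N)).val) = 1 := by
        intro m; rw [mul_zero, ZMod.val_zero, pow_zero]
      rw [Finset.sum_congr rfl fun m _ => e3 m, Finset.sum_const, Finset.card_univ,
        ZMod.card, nsmul_eq_mul, mul_one]
    · intro j _ hj
      rw [sum_e_zero N hN (n j - n k') (sub_ne_zero.mpr (fun hcon => hj (hn hcon))), mul_zero]
    · intro hcon
      exact absurd (Finset.mem_univ k') hcon
  rw [h1] at h0
  have hN0 : (N:ℂ) ≠ 0 := by exact_mod_cast NeZero.ne N
  rcases mul_eq_zero.mp h0 with h' | h'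
  · rcases mul_eq_zero.mp h' with h'' | h''
    · simpa using h''
    · exact absurd h'' hcne
  · exact absurd h' hN0

end DFTFrameAux

open DFTFrameAux in
theorem symmetry_group_eq_zpowers_diagonal (N d : ℕ) [NeZero N] (hN : N.Prime)
    (hd : 1 ≤ d) (hdN : d < N) (n : Fin d → ZMod N) (hn : Function.Injective n)
    (hstab : ∀ u : (ZMod N)ˣ,
      (fun x => (u : ZMod N) * x) '' Set.range n = Set.range n → u = 1) :
    ∀ U : Matrix (Fin d) (Fin d) ℂ, U ∈ Matrix.unitaryGroup (Fin d) ℂ →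
      (fun v => U.mulVec v) '' Set.range (dftVec N d n) = Set.range (dftVec N d n) →
      ∃ k ≤ N - 1,
        U = (Matrix.diagonal fun j =>
              Complex.exp (2 * Real.pi * Complex.I / N) ^ (n j).val) ^ k := by
  intro U hU himg
  set ω : ℂ := Complex.exp (2 * Real.pi * Complex.I / N) with hωdef
  set φ := dftVec N d n with hφ
  have hUφ : ∀ m : ZMod N, ∃ m', U.mulVec (φ m) = φ m' := by
    intro m
    have hmem : U.mulVec (φ m) ∈ Set.range φ := by
      rw [← himg]
      exact ⟨φ m, ⟨m, rfl⟩, rfl⟩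
    obtain ⟨m', hm'⟩ := hmem
    exact ⟨m', hm'.symm⟩
  obtain ⟨t, ht⟩ := hUφ 0
  have hshift : ∀ m : ZMod N, U.mulVec (φ m) = φ (m + t) := by
    by_cases hex0 : ∃ k0, n k0 ≠ 0
    · obtain ⟨k0, hk0⟩ := hex0
      intro m
      obtain ⟨m', hm'⟩ := hUφ m
      have hip := ip_unitary d U hU (φ m) (φ 0)
      rw [hm', ht, hφ] at hip
      rw [ip_formula2 N d n m' t, ip_formula2 N d n m 0] at hip
      have hcne : ((1 / Real.sqrt d : ℝ) : ℂ) ^ 2 ≠ 0 := by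
        have hd0 : (0:ℝ) < Real.sqrt d := Real.sqrt_pos.mpr (by exact_mod_cast hd)
        have : (1 / Real.sqrt d : ℝ) ≠ 0 := by positivity
        exact pow_ne_zero 2 (Complex.ofReal_ne_zero.mpr this)
      have hsums := mul_left_cancel₀ hcne hip
      have heq := g_inj N d hN n hstab k0 hk0 (t - m') (0 - m) hsums
      have hmm : m' = m + t := by linear_combination -heq
      rw [hm', hmm]
    · push_neg at hex0
      intro m
      have hconst : ∀ a : ZMod N, φ a = φ 0 := by
        intro a; funext k
        simp only [hφ, dftVec, hex0 k, mul_zero, ZMod.val_zero, pow_zero]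
      rw [hconst m, hconst (m + t), ht]; exact hconst t
  have hdiag : ∀ m : ZMod N,
      ((Matrix.diagonal fun j => ω ^ (n j).val) ^ t.val).mulVec (φ m) = φ (m + t) := by
    intro m
    funext k
    rw [Matrix.diagonal_pow, Matrix.mulVec_diagonal]
    simp only [Pi.pow_apply, hφ, dftVec]
    have hh : (ω ^ (n k).val) ^ t.val = ω ^ ((n k * t).val) := by
      rw [← pow_mul, ZMod.val_mul, e_mod]
    rw [hh]
    have h4 : (m + t) * n k = m * n k + n k * t := by ring
    rw [h4, e_add]
    ring
  refine ⟨t.val, Nat.le_sub_one_of_lt (ZMod.val_lt t), ?_⟩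
  have hsub : ∀ m : ZMod N,
      (U - (Matrix.diagonal fun j => ω ^ (n j).val) ^ t.val).mulVec (φ m) = 0 := by
    intro m
    rw [Matrix.sub_mulVec, hshift m, hdiag m, sub_self]
  have hz := complete2 N d hN hd n hn _ hsub
  exact sub_eq_zero.mp hz
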